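/- Let U : ℝⁿ → ℝⁿ be a C¹ map whose Jacobian DU(x) is invertible at every point and satisfies ‖DU(x)⁻¹‖ ≤ K for a uniform constant K > 0 and all x ∈ ℝⁿ. Then U is a global diffeomorphism of ℝⁿ onto ℝⁿ (Hadamard's theorem). -/

import Mathlib

open Matrix Set Metric

namespace HadamardAux

/-- Continuous induction on `[0, τ]`. -/
lemma bridge {P : ℝ → Prop} {τ : ℝ} (hτ : 0 ≤ τ) (h0 : P 0)
    (hmono : ∀ s s', 0 ≤ s → s ≤ s' → s' ≤ τ → P s' → P s)
    (hclosed : ∀ s ∈ Icc 0 τ, (∀ s' ∈ Ico 0 s, P s') → P s)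
    (hopen : ∀ s ∈ Ico 0 τ, P s → ∃ s' ∈ Ioc s τ, P s') : P τ := by
  set S : Set ℝ := {s | s ∈ Icc 0 τ ∧ P s} with hS
  have hne : (0:ℝ) ∈ S := ⟨⟨le_refl _, hτ⟩, h0⟩
  have hbdd : BddAbove S := ⟨τ, fun s hs => hs.1.2⟩
  set m := sSup S with hm
  have hm0 : 0 ≤ m := le_csSup hbdd hne
  have hmτ : m ≤ τ := csSup_le ⟨0, hne⟩ fun s hs => hs.1.2
  have hPm : P m := by
    apply hclosed m ⟨hm0, hmτ⟩
    intro s' hs'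
    obtain ⟨s, hsS, hss⟩ := exists_lt_of_lt_csSup ⟨0, hne⟩ hs'.2
    exact hmono s' s hs'.1 hss.le hsS.1.2 hsS.2
  rcases eq_or_lt_of_le hmτ with h | h
  · exact h ▸ hPm
  · obtain ⟨s', hs', hPs'⟩ := hopen m ⟨hm0, h⟩ hPm
    exact absurd (le_csSup hbdd ⟨⟨hm0.trans hs'.1.le, hs'.2⟩, hPs'⟩) (not_le.mpr hs'.1)

lemma matrix_bound (n : ℕ) (M : Matrix (Fin n) (Fin n) ℝ) (K : ℝ)
    (h : ‖(Matrix.toEuclideanLin M).toContinuousLinearMap‖ ≤ K) (w : Fin n → ℝ) :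
    ‖Matrix.toLin' M w‖ ≤ Real.sqrt n * K * ‖w‖ := by
  set w' : EuclideanSpace ℝ (Fin n) := (WithLp.equiv 2 (Fin n → ℝ)).symm w with hw'
  have h1 : Matrix.toLin' M w = WithLp.equiv 2 (Fin n → ℝ) (Matrix.toEuclideanLin M w') := by
    simp [hw']
  have h2 : ‖WithLp.equiv 2 (Fin n → ℝ) (Matrix.toEuclideanLin M w')‖
      ≤ ‖Matrix.toEuclideanLin M w'‖ := by
    have := (PiLp.lipschitzWith_ofLp 2 (fun _ : Fin n => ℝ)).dist_le_mul
      (Matrix.toEuclideanLin M w') 0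
    simpa [dist_eq_norm] using this
  have h3 : ‖Matrix.toEuclideanLin M w'‖ ≤ K * ‖w'‖ := by
    have := (Matrix.toEuclideanLin M).toContinuousLinearMap.le_opNorm w'
    have h4 : (Matrix.toEuclideanLin M).toContinuousLinearMap w'
        = Matrix.toEuclideanLin M w' := by simp
    rw [h4] at this
    exact this.trans (by gcongr)
  have h5 : ‖w'‖ ≤ Real.sqrt n * ‖w‖ := by
    have := (PiLp.antilipschitzWith_ofLp 2 (fun _ : Fin n => ℝ)).le_mul_dist w' 0
    have he : WithLp.ofLp w' = w := by simp [hw']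
    have hz : WithLp.ofLp (0 : WithLp 2 (Fin n → ℝ)) = 0 := by simp
    rw [he, hz, dist_zero_right, dist_zero_right] at this
    refine this.trans ?_
    gcongr
    rw [NNReal.coe_rpow, NNReal.coe_natCast, Fintype.card_fin]
    rw [Real.sqrt_eq_rpow]
    norm_num
  calc ‖Matrix.toLin' M w‖ ≤ ‖Matrix.toEuclideanLin M w'‖ := h1 ▸ h2
    _ ≤ K * ‖w'‖ := h3
    _ ≤ K * (Real.sqrt n * ‖w‖) := by
        have hK : 0 ≤ K := le_trans (norm_nonneg _) h
        exact mul_le_mul_of_nonneg_left h5 hK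
    _ = Real.sqrt n * K * ‖w‖ := by ring

variable {n : ℕ} {U : (Fin n → ℝ) → (Fin n → ℝ)}
  {A : (Fin n → ℝ) → ((Fin n → ℝ) →L[ℝ] (Fin n → ℝ))} {K₁ R r : ℝ}

/-- The uniform local expansion property. -/
def Rad (U : (Fin n → ℝ) → (Fin n → ℝ)) (K₁ R r : ℝ) : Prop :=
  ∀ x z z' : Fin n → ℝ, ‖x‖ ≤ R → ‖z - x‖ ≤ r → ‖z' - x‖ ≤ r →
    ‖z - z'‖ ≤ 2 * K₁ * ‖U z - U z'‖

lemma rad_exists (hU : ContDiff ℝ 1 U) (hA : ∀ x, HasFDerivAt U (A x) x)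
    (hK₁ : 0 < K₁) (hlow : ∀ x v, ‖v‖ ≤ K₁ * ‖A x v‖) (R : ℝ) :
    ∃ r > 0, Rad U K₁ R r := by
  have hAc : Continuous A := by
    have h1 : ∀ x, fderiv ℝ U x = A x := fun x => (hA x).fderiv
    exact (hU.continuous_fderiv one_ne_zero).congr h1
  have hcomp : IsCompact (closedBall (0 : Fin n → ℝ) (R + 1)) := isCompact_closedBall _ _
  have huc : UniformContinuousOn A (closedBall 0 (R+1)) :=
    hcomp.uniformContinuousOn_of_continuous hAc.continuousOn
  rw [Metric.uniformContinuousOn_iff] at huc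
  obtain ⟨δ, hδ, hδ'⟩ := huc (1/(2*K₁)) (by positivity)
  refine ⟨min (δ/2) 1, by positivity, ?_⟩
  set r := min (δ/2) 1 with hrdef
  have hr1 : r ≤ 1 := min_le_right _ _
  have hrδ : r < δ := lt_of_le_of_lt (min_le_left _ _) (by linarith)
  intro x z z' hx hz hz'
  have hmem : ∀ w : Fin n → ℝ, ‖w - x‖ ≤ r → w ∈ closedBall (0 : Fin n → ℝ) (R+1) := by
    intro w hw
    rw [mem_closedBall, dist_zero_right]
    calc ‖w‖ = ‖(w - x) + x‖ := by rw [sub_add_cancel]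
      _ ≤ ‖w - x‖ + ‖x‖ := norm_add_le _ _
      _ ≤ R + 1 := by linarith
  have hxmem : x ∈ closedBall (0 : Fin n → ℝ) (R+1) := by
    rw [mem_closedBall, dist_zero_right]; linarith
  set s := closedBall x r with hsdef
  have hball : ∀ ζ ∈ s, ‖A ζ - A x‖ ≤ 1/(2*K₁) := by
    intro ζ hζ
    rw [mem_closedBall, dist_eq_norm] at hζ
    have := hδ' ζ (hmem ζ hζ) x hxmem (by rw [dist_eq_norm]; linarith)
    rw [dist_eq_norm] at this
    exact this.le
  have hder : ∀ ζ ∈ s, HasFDerivWithinAt (fun w => U w - A x w) (A ζ - A x) s ζ :=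
    fun ζ _ => ((hA ζ).sub ((A x).hasFDerivAt)).hasFDerivWithinAt
  have hzs : z ∈ s := by rw [mem_closedBall, dist_eq_norm]; exact hz
  have hz's : z' ∈ s := by rw [mem_closedBall, dist_eq_norm]; exact hz'
  have key := Convex.norm_image_sub_le_of_norm_hasFDerivWithin_le hder hball
    (convex_closedBall x r) hz's hzs
  have h6 := hlow x (z - z')
  have h7 : A x (z - z') = (U z - U z') -
      ((fun w => U w - A x w) z - (fun w => U w - A x w) z') := by
    simp only [map_sub]
    abel
  have h8 : ‖A x (z - z')‖ ≤ ‖U z - U z'‖ + 1/(2*K₁) * ‖z - z'‖ := by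
    rw [h7]
    refine (norm_sub_le _ _).trans ?_
    gcongr
  have h9 : K₁ * (1/(2*K₁)) = 1/2 := by field_simp
  have h10 : ‖z - z'‖ ≤ K₁ * ‖U z - U z'‖ + 1/2 * ‖z - z'‖ := by
    calc ‖z - z'‖ ≤ K₁ * ‖A x (z - z')‖ := h6
      _ ≤ K₁ * (‖U z - U z'‖ + 1/(2*K₁) * ‖z - z'‖) := by gcongr
      _ = K₁ * ‖U z - U z'‖ + K₁ * (1/(2*K₁)) * ‖z - z'‖ := by ring
      _ = K₁ * ‖U z - U z'‖ + 1/2 * ‖z - z'‖ := by rw [h9]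
  linarith

/-- Any continuous lift of a Lipschitz path is automatically Lipschitz. -/
lemma lip (hrad : Rad U K₁ R r) (hr : 0 < r) (hK₁ : 0 < K₁) {L : ℝ} (hL : 0 ≤ L)
    {γ z : ℝ → Fin n → ℝ} (hγ : ∀ s s', ‖γ s - γ s'‖ ≤ L * |s - s'|)
    {τ : ℝ} (hτ0 : 0 ≤ τ) (hτ1 : τ ≤ 1)
    (hzc : ContinuousOn z (Icc 0 τ)) (hlift : ∀ s ∈ Icc 0 τ, U (z s) = γ s)
    (hz0R : ‖z 0‖ + 2*K₁*L ≤ R) :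
    ∀ a b, 0 ≤ a → a ≤ b → b ≤ τ → ‖z a - z b‖ ≤ 2*K₁*L * (b - a) := by
  set C := 2*K₁*L with hCdef
  have hC : 0 ≤ C := by positivity
  set P : ℝ → Prop := fun s => ∀ a b, 0 ≤ a → a ≤ b → b ≤ s → ‖z a - z b‖ ≤ C * (b - a)
    with hPdef
  have hmain : P τ := by
    apply bridge hτ0
    · -- P 0
      intro a b ha hab hb0
      have ha' : a = 0 := le_antisymm (hab.trans hb0) ha
      have hb' : b = 0 := le_antisymm hb0 (ha' ▸ hab)
      simp [ha', hb']
    · -- mono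
      intro s s' _ hss' _ hP a b ha hab hbs
      exact hP a b ha hab (hbs.trans hss')
    · -- closed
      intro s hs H a b ha hab hbs
      rcases lt_or_eq_of_le hbs with hblt | hbeq
      · exact H b ⟨ha.trans hab, hblt⟩ a b ha hab le_rfl
      · subst hbeq
        rcases lt_or_eq_of_le hab with halt | haeq
        · -- a < b = s : approximate
          refine le_of_forall_pos_le_add ?_
          intro ε hε
          have hcw : ContinuousWithinAt z (Icc 0 b) b :=
            hzc b ⟨ha.trans hab, hs.2⟩ |>.mono (Icc_subset_Icc_right hs.2) |>.mono
              (by intro u hu; exact hu)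
          rw [Metric.continuousWithinAt_iff] at hcw
          obtain ⟨δ, hδ, hδ'⟩ := hcw ε hε
          set b' := max a (b - δ/2) with hb'def
          have hab' : a ≤ b' := le_max_left _ _
          have hb'b : b' < b := max_lt halt (by linarith)
          have hb'0 : 0 ≤ b' := ha.trans hab'
          have hb'mem : b' ∈ Icc (0:ℝ) b := ⟨hb'0, hb'b.le⟩
          have hdist : dist b' b < δ := by
            rw [Real.dist_eq, abs_of_nonpos (by linarith)]
            have : b - δ/2 ≤ b' := le_max_right _ _
            linarith
          have h1 := hδ' hb'mem hdist
          rw [dist_eq_norm] at h1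
          have h2 := H b' ⟨hb'0, hb'b⟩ a b' ha hab' le_rfl
          calc ‖z a - z b‖ ≤ ‖z a - z b'‖ + ‖z b' - z b‖ := by
                have := dist_triangle (z a) (z b') (z b)
                simpa [dist_eq_norm] using this
            _ ≤ C * (b' - a) + ε := by
                have := h1.le
                gcongr
            _ ≤ C * (b - a) + ε := by
                have : C * (b' - a) ≤ C * (b - a) :=
                  mul_le_mul_of_nonneg_left (by linarith) hC
                linarith
        · subst haeq; simp
    · -- open
      intro s hs hP
      have hsmem : s ∈ Icc (0:ℝ) τ := ⟨hs.1, hs.2.le⟩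
      have hzsR : ‖z s‖ ≤ R := by
        have h1 := hP 0 s le_rfl hs.1 le_rfl
        have h2 : C * (s - 0) ≤ C * 1 :=
          mul_le_mul_of_nonneg_left (by have := hs.2.trans_le hτ1; linarith) hC
        calc ‖z s‖ = ‖z 0 + (z s - z 0)‖ := by rw [add_sub_cancel]
          _ ≤ ‖z 0‖ + ‖z s - z 0‖ := norm_add_le _ _
          _ ≤ ‖z 0‖ + C * (s - 0) := by
              have : ‖z s - z 0‖ = ‖z 0 - z s‖ := norm_sub_rev _ _
              linarith [h1, this]
          _ ≤ R := by rw [hCdef] at h2 ⊢; linarith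
      have hcw : ContinuousWithinAt z (Icc 0 τ) s := hzc s hsmem
      rw [Metric.continuousWithinAt_iff] at hcw
      obtain ⟨δ, hδ, hδ'⟩ := hcw r hr
      set s' := min τ (s + δ/2) with hs'def
      have hss' : s < s' := lt_min hs.2 (by linarith)
      have hs'τ : s' ≤ τ := min_le_left _ _
      have hmid : ∀ a b, s ≤ a → a ≤ b → b ≤ s' → ‖z a - z b‖ ≤ C * (b - a) := by
        intro a b hsa hab hbs'
        have haI : a ∈ Icc (0:ℝ) τ := ⟨hs.1.trans hsa, (hab.trans hbs').trans hs'τ⟩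
        have hbI : b ∈ Icc (0:ℝ) τ := ⟨hs.1.trans (hsa.trans hab), hbs'.trans hs'τ⟩
        have hda : dist a s < δ := by
          rw [Real.dist_eq, abs_of_nonneg (by linarith)]
          have : a ≤ s + δ/2 := (hab.trans hbs').trans (min_le_right _ _)
          linarith
        have hdb : dist b s < δ := by
          rw [Real.dist_eq, abs_of_nonneg (by linarith [hsa.trans hab])]
          have : b ≤ s + δ/2 := hbs'.trans (min_le_right _ _)
          linarith
        have hza := hδ' haI hda
        have hzb := hδ' hbI hdb
        rw [dist_eq_norm] at hza hzb
        have := hrad (z s) (z a) (z b) hzsR hza.le hzb.le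
        calc ‖z a - z b‖ ≤ 2*K₁*‖U (z a) - U (z b)‖ := this
          _ = 2*K₁*‖γ a - γ b‖ := by rw [hlift a haI, hlift b hbI]
          _ ≤ 2*K₁*(L * |a - b|) := by gcongr; exact hγ a b
          _ = C * |a - b| := by rw [hCdef]; ring
          _ = C * (b - a) := by rw [abs_of_nonpos (by linarith), neg_sub]
      refine ⟨s', ⟨hss', hs'τ⟩, ?_⟩
      intro a b ha hab hbs'
      rcases le_total b s with hbs | hsb
      · exact hP a b ha hab hbs
      · rcases le_total a s with has | hsa
        · calc ‖z a - z b‖ ≤ ‖z a - z s‖ + ‖z s - z b‖ := by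
                have := dist_triangle (z a) (z s) (z b)
                simpa [dist_eq_norm] using this
            _ ≤ C * (s - a) + C * (b - s) :=
                add_le_add (hP a s ha has le_rfl) (hmid s b le_rfl hsb hbs')
            _ = C * (b - a) := by ring
        · exact hmid a b hsa hab hbs'
  exact hmain

/-- Uniqueness of continuous lifts with the same starting point. -/
lemma uniq (hrad : Rad U K₁ R r) (hr : 0 < r)
    {γ z z' : ℝ → Fin n → ℝ} {τ : ℝ} (hτ0 : 0 ≤ τ)
    (hzc : ContinuousOn z (Icc 0 τ)) (hz'c : ContinuousOn z' (Icc 0 τ))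
    (hlift : ∀ s ∈ Icc 0 τ, U (z s) = γ s) (hlift' : ∀ s ∈ Icc 0 τ, U (z' s) = γ s)
    (hzR : ∀ s ∈ Icc 0 τ, ‖z s‖ ≤ R) (hstart : z 0 = z' 0) :
    ∀ a ∈ Icc (0:ℝ) τ, z a = z' a := by
  set P : ℝ → Prop := fun s => ∀ a, 0 ≤ a → a ≤ s → z a = z' a with hPdef
  have hmain : P τ := by
    apply bridge hτ0
    · intro a ha ha0
      have : a = 0 := le_antisymm ha0 ha
      rw [this]; exact hstart
    · intro s s' _ hss' _ hP a ha has
      exact hP a ha (has.trans hss')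
    · -- closed
      intro s hs H a ha has
      rcases lt_or_eq_of_le has with halt | haeq
      · exact H a ⟨ha, halt⟩ a ha le_rfl
      · subst haeq
        rcases eq_or_lt_of_le ha with h0a | h0a
        · rw [← h0a]; exact hstart
        · apply eq_of_forall_dist_le
          intro ε hε
          have hcw : ContinuousWithinAt z (Icc 0 τ) a := hzc a ⟨ha, hs.2⟩
          have hcw' : ContinuousWithinAt z' (Icc 0 τ) a := hz'c a ⟨ha, hs.2⟩
          rw [Metric.continuousWithinAt_iff] at hcw hcw'
          obtain ⟨δ₁, hδ₁, hδ₁'⟩ := hcw (ε/2) (by linarith)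
          obtain ⟨δ₂, hδ₂, hδ₂'⟩ := hcw' (ε/2) (by linarith)
          set δ := min δ₁ δ₂ with hδdef
          have hδ0 : 0 < δ := lt_min hδ₁ hδ₂
          set b' := max 0 (a - δ/2) with hb'def
          have hb'0 : 0 ≤ b' := le_max_left _ _
          have hb'a : b' < a := max_lt h0a (by linarith)
          have hb'mem : b' ∈ Icc (0:ℝ) τ := ⟨hb'0, hb'a.le.trans hs.2⟩
          have hdist : dist b' a < δ := by
            rw [Real.dist_eq, abs_of_nonpos (by linarith)]
            have : a - δ/2 ≤ b' := le_max_right _ _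
            linarith
          have h1 := hδ₁' hb'mem (hdist.trans_le (min_le_left _ _))
          have h2 := hδ₂' hb'mem (hdist.trans_le (min_le_right _ _))
          have h3 : z b' = z' b' := H b' ⟨hb'0, hb'a⟩ b' hb'0 le_rfl
          calc dist (z a) (z' a) ≤ dist (z a) (z b') + dist (z b') (z' a) :=
                dist_triangle _ _ _
            _ ≤ dist (z a) (z b') + (dist (z b') (z' b') + dist (z' b') (z' a)) := by
                linarith [dist_triangle (z b') (z' b') (z' a)]
            _ ≤ ε/2 + (0 + ε/2) := by
                have h0 : dist (z b') (z' b') = 0 := by rw [h3, dist_self]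
                rw [h0, dist_comm (z a)]
                exact add_le_add h1.le (add_le_add le_rfl h2.le)
            _ = ε := by ring
    · -- open
      intro s hs hP
      have hsame : z s = z' s := hP s hs.1 le_rfl
      have hzsR : ‖z s‖ ≤ R := hzR s ⟨hs.1, hs.2.le⟩
      have hcw : ContinuousWithinAt z (Icc 0 τ) s := hzc s ⟨hs.1, hs.2.le⟩
      have hcw' : ContinuousWithinAt z' (Icc 0 τ) s := hz'c s ⟨hs.1, hs.2.le⟩
      rw [Metric.continuousWithinAt_iff] at hcw hcw'
      obtain ⟨δ₁, hδ₁, hδ₁'⟩ := hcw r hr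
      obtain ⟨δ₂, hδ₂, hδ₂'⟩ := hcw' r hr
      set δ := min δ₁ δ₂ with hδdef
      have hδ0 : 0 < δ := lt_min hδ₁ hδ₂
      set s' := min τ (s + δ/2) with hs'def
      have hss' : s < s' := lt_min hs.2 (by linarith)
      have hs'τ : s' ≤ τ := min_le_left _ _
      refine ⟨s', ⟨hss', hs'τ⟩, ?_⟩
      intro a ha has'
      rcases le_total a s with has | hsa
      · exact hP a ha has
      · have haI : a ∈ Icc (0:ℝ) τ := ⟨ha, has'.trans hs'τ⟩
        have hda : dist a s < δ := by
          rw [Real.dist_eq, abs_of_nonneg (by linarith)]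
          have : a ≤ s + δ/2 := has'.trans (min_le_right _ _)
          linarith
        have h1 := hδ₁' haI (hda.trans_le (min_le_left _ _))
        have h2 := hδ₂' haI (hda.trans_le (min_le_right _ _))
        rw [dist_eq_norm] at h1 h2
        rw [← hsame] at h2
        have h3 := hrad (z s) (z a) (z' a) hzsR h1.le h2.le
        have h4 : U (z a) = U (z' a) := by rw [hlift a haI, hlift' a haI]
        rw [h4, sub_self, norm_zero, mul_zero] at h3
        have : ‖z a - z' a‖ = 0 := le_antisymm h3 (norm_nonneg _)
        exact sub_eq_zero.mp (norm_eq_zero.mp this)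
  intro a ha
  exact hmain a ha.1 ha.2

/-- Stability: lifts of nearby paths with nearby starting points stay close. -/
lemma stab (hrad : Rad U K₁ R r) (hr : 0 < r) (hK₁ : 0 < K₁)
    {γ γ' z z' : ℝ → Fin n → ℝ} {ε : ℝ}
    (hzc : ContinuousOn z (Icc 0 1)) (hz'c : ContinuousOn z' (Icc 0 1))
    (hlift : ∀ s ∈ Icc (0:ℝ) 1, U (z s) = γ s) (hlift' : ∀ s ∈ Icc (0:ℝ) 1, U (z' s) = γ' s)
    (hzR : ∀ s ∈ Icc (0:ℝ) 1, ‖z s‖ ≤ R)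
    (hclose : ∀ s ∈ Icc (0:ℝ) 1, ‖γ s - γ' s‖ ≤ ε) (hstart : ‖z 0 - z' 0‖ ≤ ε)
    (hε : 0 < ε) (hεr : (2*K₁+1)*ε ≤ r) :
    ∀ a ∈ Icc (0:ℝ) 1, ‖z a - z' a‖ ≤ (2*K₁+1)*ε := by
  have key : ∀ a, a ∈ Icc (0:ℝ) 1 → ‖z a - z' a‖ ≤ (2*K₁+1)*ε → ‖z a - z' a‖ ≤ 2*K₁*ε := by
    intro a haI hbd
    have h1 : ‖z a - z a‖ ≤ r := by rw [sub_self, norm_zero]; exact hr.le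
    have h2 : ‖z' a - z a‖ ≤ r := by
      rw [norm_sub_rev]; exact hbd.trans hεr
    have h3 := hrad (z a) (z a) (z' a) (hzR a haI) h1 h2
    calc ‖z a - z' a‖ ≤ 2*K₁*‖U (z a) - U (z' a)‖ := h3
      _ = 2*K₁*‖γ a - γ' a‖ := by rw [hlift a haI, hlift' a haI]
      _ ≤ 2*K₁*ε := by gcongr; exact hclose a haI
  set P : ℝ → Prop := fun s => ∀ a, 0 ≤ a → a ≤ s → ‖z a - z' a‖ ≤ (2*K₁+1)*ε with hPdef
  have hmain : P 1 := by
    apply bridge zero_le_one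
    · intro a ha ha0
      have : a = 0 := le_antisymm ha0 ha
      rw [this]
      calc ‖z 0 - z' 0‖ ≤ ε := hstart
        _ ≤ (2*K₁+1)*ε := by nlinarith
    · intro s s' _ hss' _ hP a ha has
      exact hP a ha (has.trans hss')
    · -- closed
      intro s hs H a ha has
      rcases lt_or_eq_of_le has with halt | haeq
      · exact H a ⟨ha, halt⟩ a ha le_rfl
      · subst haeq
        rcases eq_or_lt_of_le ha with h0a | h0a
        · rw [← h0a]
          calc ‖z 0 - z' 0‖ ≤ ε := hstart
            _ ≤ (2*K₁+1)*ε := by nlinarith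
        · have hcw : ContinuousWithinAt z (Icc 0 1) a := hzc a ⟨ha, hs.2⟩
          have hcw' : ContinuousWithinAt z' (Icc 0 1) a := hz'c a ⟨ha, hs.2⟩
          rw [Metric.continuousWithinAt_iff] at hcw hcw'
          obtain ⟨δ₁, hδ₁, hδ₁'⟩ := hcw (ε/2) (by linarith)
          obtain ⟨δ₂, hδ₂, hδ₂'⟩ := hcw' (ε/2) (by linarith)
          set δ := min δ₁ δ₂ with hδdef
          have hδ0 : 0 < δ := lt_min hδ₁ hδ₂
          set b' := max 0 (a - δ/2) with hb'def
          have hb'0 : 0 ≤ b' := le_max_left _ _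
          have hb'a : b' < a := max_lt h0a (by linarith)
          have hb'mem : b' ∈ Icc (0:ℝ) 1 := ⟨hb'0, hb'a.le.trans hs.2⟩
          have hdist : dist b' a < δ := by
            rw [Real.dist_eq, abs_of_nonpos (by linarith)]
            have : a - δ/2 ≤ b' := le_max_right _ _
            linarith
          have h1 := hδ₁' hb'mem (hdist.trans_le (min_le_left _ _))
          have h2 := hδ₂' hb'mem (hdist.trans_le (min_le_right _ _))
          rw [dist_eq_norm] at h1 h2
          have h3 := key b' hb'mem (H b' ⟨hb'0, hb'a⟩ b' hb'0 le_rfl)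
          calc ‖z a - z' a‖ ≤ ‖z a - z b'‖ + ‖z b' - z' a‖ := by
                have := dist_triangle (z a) (z b') (z' a)
                simpa [dist_eq_norm] using this
            _ ≤ ‖z a - z b'‖ + (‖z b' - z' b'‖ + ‖z' b' - z' a‖) := by
                have := dist_triangle (z b') (z' b') (z' a)
                simp only [dist_eq_norm] at this
                linarith
            _ ≤ ε/2 + (2*K₁*ε + ε/2) := by
                have h1' : ‖z a - z b'‖ ≤ ε/2 := by rw [norm_sub_rev]; exact h1.le
                gcongr
            _ = (2*K₁+1)*ε := by ring
    · -- open
      intro s hs hP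
      have hsI : s ∈ Icc (0:ℝ) 1 := ⟨hs.1, hs.2.le⟩
      have hkey := key s hsI (hP s hs.1 le_rfl)
      have hcw : ContinuousWithinAt z (Icc 0 1) s := hzc s hsI
      have hcw' : ContinuousWithinAt z' (Icc 0 1) s := hz'c s hsI
      rw [Metric.continuousWithinAt_iff] at hcw hcw'
      obtain ⟨δ₁, hδ₁, hδ₁'⟩ := hcw (ε/2) (by linarith)
      obtain ⟨δ₂, hδ₂, hδ₂'⟩ := hcw' (ε/2) (by linarith)
      set δ := min δ₁ δ₂ with hδdef
      have hδ0 : 0 < δ := lt_min hδ₁ hδ₂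
      set s' := min 1 (s + δ/2) with hs'def
      have hss' : s < s' := lt_min hs.2 (by linarith)
      have hs'1 : s' ≤ 1 := min_le_left _ _
      refine ⟨s', ⟨hss', hs'1⟩, ?_⟩
      intro a ha has'
      rcases le_total a s with has | hsa
      · exact hP a ha has
      · have haI : a ∈ Icc (0:ℝ) 1 := ⟨ha, has'.trans hs'1⟩
        have hda : dist a s < δ := by
          rw [Real.dist_eq, abs_of_nonneg (by linarith)]
          have : a ≤ s + δ/2 := has'.trans (min_le_right _ _)
          linarith
        have h1 := hδ₁' haI (hda.trans_le (min_le_left _ _))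
        have h2 := hδ₂' haI (hda.trans_le (min_le_right _ _))
        rw [dist_eq_norm] at h1 h2
        calc ‖z a - z' a‖ ≤ ‖z a - z s‖ + ‖z s - z' a‖ := by
              have := dist_triangle (z a) (z s) (z' a)
              simpa [dist_eq_norm] using this
          _ ≤ ‖z a - z s‖ + (‖z s - z' s‖ + ‖z' s - z' a‖) := by
              have := dist_triangle (z s) (z' s) (z' a)
              simp only [dist_eq_norm] at this
              linarith
          _ ≤ ε/2 + (2*K₁*ε + ε/2) := by
              have h2' : ‖z' s - z' a‖ ≤ ε/2 := by rw [norm_sub_rev]; exact h2.le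
              gcongr
          _ = (2*K₁+1)*ε := by ring
  intro a ha
  exact hmain a ha.1 ha.2

/-- Existence of lifts of Lipschitz paths through a local homeomorphism with
uniformly expanding local inverses. -/
lemma lift_exists (hUc : Continuous U) (hrad : Rad U K₁ R r) (hr : 0 < r) (hK₁ : 0 < K₁)
    (hloc : ∀ x : Fin n → ℝ, ∃ φ : OpenPartialHomeomorph (Fin n → ℝ) (Fin n → ℝ),
      x ∈ φ.source ∧ ⇑φ = U)
    {L : ℝ} (hL : 0 ≤ L) {γ : ℝ → Fin n → ℝ} (hγ : ∀ s s', ‖γ s - γ s'‖ ≤ L * |s - s'|)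
    (hγc : Continuous γ) {x₀ : Fin n → ℝ} (hx₀ : U x₀ = γ 0) (hR : ‖x₀‖ + 2*K₁*L ≤ R) :
    ∃ z : ℝ → Fin n → ℝ, ContinuousOn z (Icc 0 1) ∧ z 0 = x₀ ∧
      ∀ s ∈ Icc (0:ℝ) 1, U (z s) = γ s := by
  set C := 2*K₁*L with hCdef
  have hC : 0 ≤ C := by positivity
  set P : ℝ → Prop := fun τ => ∃ z : ℝ → Fin n → ℝ, ContinuousOn z (Icc 0 τ) ∧ z 0 = x₀ ∧
      ∀ s ∈ Icc (0:ℝ) τ, U (z s) = γ s with hPdef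
  -- automatic properties of lifts
  have hauto : ∀ {τ : ℝ}, 0 ≤ τ → τ ≤ 1 → ∀ {z : ℝ → Fin n → ℝ}, ContinuousOn z (Icc 0 τ) →
      z 0 = x₀ → (∀ s ∈ Icc (0:ℝ) τ, U (z s) = γ s) →
      (∀ a b, 0 ≤ a → a ≤ b → b ≤ τ → ‖z a - z b‖ ≤ C * (b - a)) ∧
      (∀ s ∈ Icc (0:ℝ) τ, ‖z s‖ ≤ R) := by
    intro τ hτ0 hτ1 z hzc hz0 hzl
    have h1 := lip hrad hr hK₁ hL hγ hτ0 hτ1 hzc hzl (by rw [hz0]; exact hR)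
    refine ⟨h1, ?_⟩
    intro s hsI
    have h2 : ‖z 0 - z s‖ ≤ C * (s - 0) := h1 0 s le_rfl hsI.1 hsI.2
    have h3 : C * (s - 0) ≤ C * 1 :=
      mul_le_mul_of_nonneg_left (by linarith [hsI.2.trans hτ1]) hC
    rw [mul_one] at h3
    calc ‖z s‖ = ‖z 0 + (z s - z 0)‖ := by rw [add_sub_cancel]
      _ ≤ ‖z 0‖ + ‖z s - z 0‖ := norm_add_le _ _
      _ ≤ ‖z 0‖ + C * (s - 0) := by
          have : ‖z s - z 0‖ = ‖z 0 - z s‖ := norm_sub_rev _ _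
          linarith
      _ ≤ R := by rw [hz0]; linarith
  have hmain : P 1 := by
    apply bridge zero_le_one
    · -- P 0
      refine ⟨fun _ => x₀, continuousOn_const, rfl, ?_⟩
      intro s hs
      have : s = 0 := le_antisymm hs.2 hs.1
      rw [this, hx₀]
    · -- mono
      rintro s s' hs0 hss' _ ⟨z, hzc, hz0, hzl⟩
      exact ⟨z, hzc.mono (Icc_subset_Icc_right hss'), hz0,
        fun u hu => hzl u ⟨hu.1, hu.2.trans hss'⟩⟩
    · -- closed
      rintro τ hτI H
      rcases eq_or_lt_of_le hτI.1 with hτ0 | hτ0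
      · refine ⟨fun _ => x₀, continuousOn_const, rfl, ?_⟩
        intro s hs
        have : s = 0 := le_antisymm (hs.2.trans hτ0.symm.le) hs.1
        rw [this, hx₀]
      · -- τ > 0 : glue the lifts
        choose Z hZc hZ0 hZl using H
        set g : ℝ → Fin n → ℝ :=
          fun s => if h : s ∈ Ico (0:ℝ) τ then Z s h s else x₀ with hgdef
        have hZR : ∀ s (hs : s ∈ Ico (0:ℝ) τ), ∀ u ∈ Icc (0:ℝ) s, ‖Z s hs u‖ ≤ R := by
          intro s hs
          exact (hauto hs.1 (hs.2.le.trans hτI.2) (hZc s hs) (hZ0 s hs) (hZl s hs)).2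
        have hcoh : ∀ s (hs : s ∈ Ico (0:ℝ) τ), ∀ a ∈ Icc (0:ℝ) s, g a = Z s hs a := by
          intro s hs a ha
          have haI : a ∈ Ico (0:ℝ) τ := ⟨ha.1, lt_of_le_of_lt ha.2 hs.2⟩
          have h1 : g a = Z a haI a := dif_pos haI
          rw [h1]
          have := uniq hrad hr (τ := a) ha.1 (hZc a haI)
            ((hZc s hs).mono (Icc_subset_Icc_right ha.2))
            (hZl a haI) (fun u hu => hZl s hs u ⟨hu.1, hu.2.trans ha.2⟩)
            (hZR a haI) (by rw [hZ0 a haI, hZ0 s hs])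
          exact this a ⟨ha.1, le_rfl⟩
        have h0mem : (0:ℝ) ∈ Ico (0:ℝ) τ := ⟨le_rfl, hτ0⟩
        have hg0 : g 0 = x₀ := by
          rw [hcoh 0 h0mem 0 ⟨le_rfl, le_rfl⟩, hZ0 0 h0mem]
        have hglift : ∀ a ∈ Ico (0:ℝ) τ, U (g a) = γ a := by
          intro a ha
          rw [hcoh a ha a ⟨ha.1, le_rfl⟩]
          exact hZl a ha a ⟨ha.1, le_rfl⟩
        have hglip : ∀ a ∈ Ico (0:ℝ) τ, ∀ b ∈ Ico (0:ℝ) τ, ‖g a - g b‖ ≤ C * |a - b| := by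
          have haux : ∀ a ∈ Ico (0:ℝ) τ, ∀ b ∈ Ico (0:ℝ) τ, a ≤ b →
              ‖g a - g b‖ ≤ C * (b - a) := by
            intro a ha b hb hab
            rw [hcoh b hb a ⟨ha.1, hab⟩, hcoh b hb b ⟨hb.1, le_rfl⟩]
            exact (hauto hb.1 (hb.2.le.trans hτI.2) (hZc b hb) (hZ0 b hb) (hZl b hb)).1
              a b ha.1 hab le_rfl
          intro a ha b hb
          rcases le_total a b with hab | hba
          · rw [abs_of_nonpos (by linarith), neg_sub]
            exact haux a ha b hb hab
          · rw [abs_of_nonneg (by linarith), norm_sub_rev]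
            exact haux b hb a ha hba
        -- extend coordinatewise
        have hlipOn : ∀ i : Fin n, LipschitzOnWith (Real.toNNReal C)
            (fun s => g s i) (Ico (0:ℝ) τ) := by
          intro i
          apply LipschitzOnWith.of_dist_le_mul
          intro a ha b hb
          rw [Real.dist_eq, Real.dist_eq]
          have h1 : |g a i - g b i| ≤ ‖g a - g b‖ := by
            have := norm_le_pi_norm (g a - g b) i
            simpa [Real.norm_eq_abs] using this
          calc |g a i - g b i| ≤ ‖g a - g b‖ := h1
            _ ≤ C * |a - b| := hglip a ha b hb
            _ = (Real.toNNReal C : ℝ) * |a - b| := by rw [Real.coe_toNNReal C hC]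
        choose G hG1 hG2 using fun i => (hlipOn i).extend_real
        set zτ : ℝ → Fin n → ℝ := fun s i => G i s with hzτdef
        have hzτc : Continuous zτ := continuous_pi fun i => (hG1 i).continuous
        have hEq : ∀ a ∈ Ico (0:ℝ) τ, zτ a = g a :=
          fun a ha => funext fun i => ((hG2 i) ha).symm
        have hUeq : EqOn (U ∘ zτ) γ (Icc (0:ℝ) τ) := by
          have h1 : EqOn (U ∘ zτ) γ (Ico (0:ℝ) τ) := by
            intro a ha
            simp only [Function.comp_apply]
            rw [hEq a ha]
            exact hglift a ha
          have h2 := h1.closure (hUc.comp hzτc) hγc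
          rwa [closure_Ico (ne_of_lt hτ0)] at h2
        exact ⟨zτ, hzτc.continuousOn, by rw [hEq 0 h0mem, hg0], fun s hs => hUeq hs⟩
    · -- open
      rintro s hs ⟨z, hzc, hz0, hzl⟩
      obtain ⟨φ, hxs, hφU⟩ := hloc (z s)
      have hsI : s ∈ Icc (0:ℝ) s := ⟨hs.1, le_rfl⟩
      have hφzs : φ (z s) = γ s := by rw [hφU]; exact hzl s hsI
      have htar : γ s ∈ φ.target := hφzs ▸ φ.map_source hxs
      obtain ⟨δ, hδ, hδ'⟩ := Metric.isOpen_iff.mp (φ.open_target.preimage hγc)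
        s (by rw [mem_preimage]; exact htar)
      set s' := min 1 (s + δ/2) with hs'def
      have hss' : s < s' := lt_min hs.2 (by linarith)
      have hs'1 : s' ≤ 1 := min_le_left _ _
      have htarget : ∀ b, s ≤ b → b ≤ s' → γ b ∈ φ.target := by
        intro b hsb hbs'
        have : b ∈ Metric.ball s δ := by
          rw [Metric.mem_ball, Real.dist_eq, abs_of_nonneg (by linarith)]
          have : b ≤ s + δ/2 := hbs'.trans (min_le_right _ _)
          linarith
        exact hδ' this
      have hsymms : φ.symm (γ s) = z s := by rw [← hφzs, φ.left_inv hxs]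
      set f₁ : ℝ → Fin n → ℝ := fun b => z (max 0 (min b s)) with hf₁def
      set f₂ : ℝ → Fin n → ℝ := fun b => φ.symm (γ (min s' (max b s))) with hf₂def
      have hf₁c : Continuous f₁ := by
        apply hzc.comp_continuous
        · exact continuous_const.max (continuous_id.min continuous_const)
        · intro b
          exact ⟨le_max_left _ _, max_le hs.1 (min_le_right _ _)⟩
      have hf₂c : Continuous f₂ := by
        apply φ.continuousOn_symm.comp_continuous
        · exact hγc.comp (continuous_const.min (continuous_id.max continuous_const))
        · intro b
          exact htarget _ (le_min hss'.le (le_max_right _ _)) (min_le_left _ _)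
      set z' : ℝ → Fin n → ℝ := fun b => if b ≤ s then f₁ b else f₂ b with hz'def
      have hbdry : f₁ s = f₂ s := by
        simp only [hf₁def, hf₂def, min_self, max_self]
        rw [max_eq_right hs.1, min_eq_right (hss'.le), hsymms]
      have hz'c : Continuous z' :=
        Continuous.if_le hf₁c hf₂c continuous_id continuous_const
          (fun b (hb : b = s) => by rw [hb, hbdry])
      have hz'1 : ∀ b, 0 ≤ b → b ≤ s → z' b = z b := by
        intro b hb0 hbs
        simp only [hz'def, if_pos hbs, hf₁def, min_eq_left hbs, max_eq_right hb0]
      have hz'2 : ∀ b, s ≤ b → b ≤ s' → z' b = φ.symm (γ b) := by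
        intro b hsb hbs'
        rcases eq_or_lt_of_le hsb with h | h
        · rw [hz'1 b (hs.1.trans hsb) h.symm.le, ← h, hsymms]
        · simp only [hz'def, if_neg (not_le.mpr h), hf₂def, max_eq_left hsb,
            min_eq_right hbs']
      refine ⟨s', ⟨hss', hs'1⟩, z', hz'c.continuousOn, ?_, ?_⟩
      · rw [hz'1 0 le_rfl hs.1, hz0]
      · intro u hu
        rcases le_total u s with hus | hsu
        · rw [hz'1 u hu.1 hus]
          exact hzl u ⟨hu.1, hus⟩
        · rw [hz'2 u hsu hu.2, ← hφU]
          exact φ.right_inv (htarget u hsu hu.2)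
  exact hmain

end HadamardAux

open HadamardAux in
theorem hadamard_global_diffeomorphism
    (n : ℕ) (U : (Fin n → ℝ) → (Fin n → ℝ)) (hU : ContDiff ℝ 1 U)
    (DU : (Fin n → ℝ) → Matrix (Fin n) (Fin n) ℝ)
    (hDU : ∀ x, HasFDerivAt U ((Matrix.toLin' (DU x)).toContinuousLinearMap) x)
    (hDUinv : ∀ x, IsUnit (DU x))
    (K : ℝ) (hK : 0 < K)
    (hbound : ∀ x, ‖(Matrix.toEuclideanLin (DU x)⁻¹).toContinuousLinearMap‖ ≤ K) :
    Function.Bijective U ∧ ContDiff ℝ 1 (Function.invFun U) := by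
  classical
  set A : (Fin n → ℝ) → ((Fin n → ℝ) →L[ℝ] (Fin n → ℝ)) :=
    fun x => (Matrix.toLin' (DU x)).toContinuousLinearMap with hAdef
  have hA : ∀ x, HasFDerivAt U (A x) x := hDU
  have hUc : Continuous U := hU.continuous
  have hdet : ∀ x, IsUnit (DU x).det := fun x => (Matrix.isUnit_iff_isUnit_det _).mp (hDUinv x)
  set K₁ : ℝ := Real.sqrt n * K + 1 with hK₁def
  have hsqrt : 0 ≤ Real.sqrt n := Real.sqrt_nonneg _
  have hK₁ : 0 < K₁ := by positivity
  have hAapp : ∀ x v, A x v = Matrix.toLin' (DU x) v := by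
    intro x v; simp [hAdef]
  have hlow : ∀ x v, ‖v‖ ≤ K₁ * ‖A x v‖ := by
    intro x v
    have h1 : Matrix.toLin' (DU x)⁻¹ (A x v) = v := by
      rw [hAapp]
      have h2 : Matrix.toLin' ((DU x)⁻¹ * DU x) v = v := by
        rw [Matrix.nonsing_inv_mul _ (hdet x), Matrix.toLin'_one]
        rfl
      rw [Matrix.toLin'_mul] at h2
      simpa using h2
    calc ‖v‖ = ‖Matrix.toLin' (DU x)⁻¹ (A x v)‖ := by rw [h1]
      _ ≤ Real.sqrt n * K * ‖A x v‖ := matrix_bound n _ K (hbound x) _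
      _ ≤ K₁ * ‖A x v‖ := by
          apply mul_le_mul_of_nonneg_right _ (norm_nonneg _)
          rw [hK₁def]; linarith
  have heqv : ∀ x, ∃ e : (Fin n → ℝ) ≃L[ℝ] (Fin n → ℝ),
      (e : (Fin n → ℝ) →L[ℝ] (Fin n → ℝ)) = A x := by
    intro x
    refine ⟨LinearEquiv.toContinuousLinearEquiv
      (LinearEquiv.ofLinear (Matrix.toLin' (DU x)) (Matrix.toLin' (DU x)⁻¹) ?_ ?_), ?_⟩
    · rw [← Matrix.toLin'_mul, Matrix.mul_nonsing_inv _ (hdet x), Matrix.toLin'_one]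
    · rw [← Matrix.toLin'_mul, Matrix.nonsing_inv_mul _ (hdet x), Matrix.toLin'_one]
    · ext v
      simp [hAdef]
  choose E hE using heqv
  have hloc : ∀ x : Fin n → ℝ, ∃ φ : OpenPartialHomeomorph (Fin n → ℝ) (Fin n → ℝ),
      x ∈ φ.source ∧ ⇑φ = U := by
    intro x
    have hfd : HasFDerivAt U ((E x : (Fin n → ℝ) →L[ℝ] (Fin n → ℝ))) x := by
      rw [hE]; exact hA x
    exact ⟨(hU.contDiffAt).toOpenPartialHomeomorph U hfd one_ne_zero,
      ContDiffAt.mem_toOpenPartialHomeomorph_source _ _ _,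
      ContDiffAt.toOpenPartialHomeomorph_coe _ _ _⟩
  -- surjectivity
  have hsurj : Function.Surjective U := by
    intro y
    set γ : ℝ → (Fin n → ℝ) := fun s => U 0 + s • (y - U 0) with hγdef
    set L : ℝ := ‖y - U 0‖ with hLdef
    have hγ : ∀ s s', ‖γ s - γ s'‖ ≤ L * |s - s'| := by
      intro s s'
      have h1 : γ s - γ s' = (s - s') • (y - U 0) := by
        simp only [hγdef]
        rw [add_sub_add_left_eq_sub, ← sub_smul]
      rw [h1, norm_smul, Real.norm_eq_abs, mul_comm]
    have hγc : Continuous γ := continuous_const.add (continuous_id.smul continuous_const)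
    have hx₀ : U 0 = γ 0 := by simp [hγdef]
    obtain ⟨r, hr, hrad⟩ := rad_exists hU hA hK₁ hlow (‖(0 : Fin n → ℝ)‖ + 2*K₁*L)
    obtain ⟨z, hzc, hz0, hzl⟩ :=
      lift_exists hUc hrad hr hK₁ hloc (norm_nonneg _) hγ hγc hx₀ le_rfl
    refine ⟨z 1, ?_⟩
    rw [hzl 1 ⟨zero_le_one, le_rfl⟩]
    simp [hγdef]
  -- injectivity
  have hinj : Function.Injective U := by
    intro a b hab
    set y₀ := U a with hy₀
    set c : ℝ → (Fin n → ℝ) := fun t => a + t • (b - a) with hcdef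
    have hcc : Continuous c := continuous_const.add (continuous_id.smul continuous_const)
    have hc0 : c 0 = a := by simp [hcdef]
    have hc1 : c 1 = b := by simp [hcdef]
    set p : ℝ → (Fin n → ℝ) := fun t => U (c t) with hpdef
    have hpc : Continuous p := hUc.comp hcc
    obtain ⟨L, hLbd⟩ := isCompact_Icc.exists_bound_of_continuousOn
      ((continuous_const.sub hpc).continuousOn :
        ContinuousOn (fun t => y₀ - p t) (Icc (0:ℝ) 1))
    have hL : 0 ≤ L := (norm_nonneg _).trans (hLbd 0 ⟨le_rfl, zero_le_one⟩)
    set Γ : ℝ → ℝ → (Fin n → ℝ) := fun t s => p t + s • (y₀ - p t) with hΓdef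
    set R : ℝ := (‖a‖ + ‖b - a‖) + 2*K₁*L with hRdef
    obtain ⟨r, hr, hrad⟩ := rad_exists hU hA hK₁ hlow R
    have hΓlip : ∀ t ∈ Icc (0:ℝ) 1, ∀ s s', ‖Γ t s - Γ t s'‖ ≤ L * |s - s'| := by
      intro t ht s s'
      have h1 : Γ t s - Γ t s' = (s - s') • (y₀ - p t) := by
        simp only [hΓdef]
        rw [add_sub_add_left_eq_sub, ← sub_smul]
      rw [h1, norm_smul, Real.norm_eq_abs]
      rw [mul_comm]
      exact mul_le_mul_of_nonneg_right (hLbd t ht) (abs_nonneg _)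
    have hcR : ∀ t ∈ Icc (0:ℝ) 1, ‖c t‖ + 2*K₁*L ≤ R := by
      intro t ht
      have h1 : ‖c t‖ ≤ ‖a‖ + ‖b - a‖ := by
        calc ‖c t‖ ≤ ‖a‖ + ‖t • (b - a)‖ := norm_add_le _ _
          _ = ‖a‖ + |t| * ‖b - a‖ := by rw [norm_smul, Real.norm_eq_abs]
          _ ≤ ‖a‖ + 1 * ‖b - a‖ := by
              gcongr
              rw [abs_of_nonneg ht.1]; exact ht.2
          _ = ‖a‖ + ‖b - a‖ := by ring
      rw [hRdef]; linarith
    have hΓ0 : ∀ t ∈ Icc (0:ℝ) 1, U (c t) = Γ t 0 := by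
      intro t _
      simp [hΓdef, hpdef]
    have hΓc : ∀ t, Continuous (Γ t) :=
      fun t => continuous_const.add (continuous_id.smul continuous_const)
    have hliftex : ∀ t (ht : t ∈ Icc (0:ℝ) 1), ∃ z : ℝ → Fin n → ℝ,
        ContinuousOn z (Icc 0 1) ∧ z 0 = c t ∧ ∀ s ∈ Icc (0:ℝ) 1, U (z s) = Γ t s :=
      fun t ht => lift_exists hUc hrad hr hK₁ hloc hL (hΓlip t ht) (hΓc t)
        (hΓ0 t ht) (hcR t ht)
    choose zt hztc hzt0 hztl using hliftex
    have hautoR : ∀ t (ht : t ∈ Icc (0:ℝ) 1), ∀ s ∈ Icc (0:ℝ) 1, ‖zt t ht s‖ ≤ R := by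
      intro t ht s hsI
      have h1 := lip hrad hr hK₁ hL (hΓlip t ht) zero_le_one le_rfl (hztc t ht)
        (hztl t ht) (by rw [hzt0 t ht]; exact hcR t ht)
      have h2 : ‖zt t ht 0 - zt t ht s‖ ≤ 2*K₁*L * (s - 0) := h1 0 s le_rfl hsI.1 hsI.2
      have h3 : 2*K₁*L * (s - 0) ≤ 2*K₁*L * 1 :=
        mul_le_mul_of_nonneg_left (by linarith [hsI.2]) (by positivity)
      rw [mul_one] at h3
      have h4 := hcR t ht
      calc ‖zt t ht s‖ = ‖zt t ht 0 + (zt t ht s - zt t ht 0)‖ := by rw [add_sub_cancel]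
        _ ≤ ‖zt t ht 0‖ + ‖zt t ht s - zt t ht 0‖ := norm_add_le _ _
        _ ≤ ‖c t‖ + 2*K₁*L * (s - 0) := by
            have h5 : ‖zt t ht s - zt t ht 0‖ ≤ 2*K₁*L*(s-0) := by
              rw [norm_sub_rev]; exact h2
            have h6 : ‖zt t ht 0‖ = ‖c t‖ := by rw [hzt0 t ht]
            rw [h6]
            linarith
        _ ≤ R := by linarith
    have hfiber : ∀ t (ht : t ∈ Icc (0:ℝ) 1), U (zt t ht 1) = y₀ := by
      intro t ht
      rw [hztl t ht 1 ⟨zero_le_one, le_rfl⟩]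
      simp [hΓdef]
    -- local constancy of the endpoint
    have hconst : ∀ t (ht : t ∈ Icc (0:ℝ) 1), ∃ δ > 0, ∀ t' (ht' : t' ∈ Icc (0:ℝ) 1),
        |t' - t| < δ → zt t' ht' 1 = zt t ht 1 := by
      intro t ht
      set ε : ℝ := r / (2*(2*K₁+1)) with hεdef
      have h2K : 0 < 2*K₁+1 := by linarith
      have hε : 0 < ε := by positivity
      have hεr : (2*K₁+1)*ε ≤ r := by
        rw [hεdef]
        rw [mul_div_assoc']
        rw [div_le_iff₀ (by positivity)]
        nlinarith
      obtain ⟨δ₁, hδ₁, hδ₁'⟩ := (Metric.continuous_iff.mp hpc) t ε hε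
      obtain ⟨δ₂, hδ₂, hδ₂'⟩ := (Metric.continuous_iff.mp hcc) t ε hε
      refine ⟨min δ₁ δ₂, lt_min hδ₁ hδ₂, ?_⟩
      intro t' ht' hdist
      have hd1 : dist t' t < δ₁ := by
        rw [Real.dist_eq]; exact hdist.trans_le (min_le_left _ _)
      have hd2 : dist t' t < δ₂ := by
        rw [Real.dist_eq]; exact hdist.trans_le (min_le_right _ _)
      have hp' : ‖p t - p t'‖ ≤ ε := by
        have := hδ₁' t' hd1
        rw [dist_eq_norm, norm_sub_rev] at this
        exact this.le
      have hc' : ‖c t - c t'‖ ≤ ε := by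
        have := hδ₂' t' hd2
        rw [dist_eq_norm, norm_sub_rev] at this
        exact this.le
      have hclose : ∀ s ∈ Icc (0:ℝ) 1, ‖Γ t s - Γ t' s‖ ≤ ε := by
        intro s hsI
        have h1 : Γ t s - Γ t' s = (1 - s) • (p t - p t') := by
          simp only [hΓdef]
          module
        rw [h1, norm_smul, Real.norm_eq_abs, abs_of_nonneg (by linarith [hsI.2])]
        calc (1 - s) * ‖p t - p t'‖ ≤ 1 * ‖p t - p t'‖ :=
              mul_le_mul_of_nonneg_right (by linarith [hsI.1]) (norm_nonneg _)
          _ = ‖p t - p t'‖ := one_mul _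
          _ ≤ ε := hp'
      have hstart : ‖zt t ht 0 - zt t' ht' 0‖ ≤ ε := by
        rw [hzt0 t ht, hzt0 t' ht']
        exact hc'
      have hstab := stab hrad hr hK₁ (hztc t ht) (hztc t' ht') (hztl t ht)
        (hztl t' ht') (hautoR t ht) hclose hstart hε hεr
      have h5 : ‖zt t ht 1 - zt t' ht' 1‖ ≤ r :=
        (hstab 1 ⟨zero_le_one, le_rfl⟩).trans hεr
      have h6 : ‖zt t ht 1 - zt t ht 1‖ ≤ r := by
        rw [sub_self, norm_zero]; exact hr.le
      have h7 : ‖zt t' ht' 1 - zt t ht 1‖ ≤ r := by rw [norm_sub_rev]; exact h5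
      have h8 := hrad (zt t ht 1) (zt t ht 1) (zt t' ht' 1)
        (hautoR t ht 1 ⟨zero_le_one, le_rfl⟩) h6 h7
      rw [hfiber t ht, hfiber t' ht', sub_self, norm_zero, mul_zero] at h8
      have h9 : ‖zt t ht 1 - zt t' ht' 1‖ = 0 := le_antisymm h8 (norm_nonneg _)
      exact (sub_eq_zero.mp (norm_eq_zero.mp h9)).symm
    -- the endpoint map
    set e : ℝ → (Fin n → ℝ) :=
      fun t => if h : t ∈ Icc (0:ℝ) 1 then zt t h 1 else a with hedef
    have hemem : ∀ t (ht : t ∈ Icc (0:ℝ) 1), e t = zt t ht 1 := fun t ht => dif_pos ht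
    have heconst : ∀ t (ht : t ∈ Icc (0:ℝ) 1), ∃ δ > 0, ∀ t' (ht' : t' ∈ Icc (0:ℝ) 1),
        |t' - t| < δ → e t' = e t := by
      intro t ht
      obtain ⟨δ, hδ, hδ'⟩ := hconst t ht
      exact ⟨δ, hδ, fun t' ht' hd => by rw [hemem t' ht', hemem t ht]; exact hδ' t' ht' hd⟩
    have hP1 : ∀ u, 0 ≤ u → u ≤ 1 → e u = e 0 := by
      have := bridge (P := fun t => ∀ u, 0 ≤ u → u ≤ t → e u = e 0) zero_le_one
        (by intro u hu hu0; have : u = 0 := le_antisymm hu0 hu; rw [this])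
        (by intro s s' _ hss' _ hP u hu hus; exact hP u hu (hus.trans hss'))
        ?_ ?_
      · exact this
      · -- closed
        intro t htI H u hu hut
        rcases lt_or_eq_of_le hut with hlt | heq
        · exact H u ⟨hu, hlt⟩ u hu le_rfl
        · subst heq
          rcases eq_or_lt_of_le hu with h0u | h0u
          · rw [← h0u]
          · obtain ⟨δ, hδ, hδ'⟩ := heconst u ⟨hu, htI.2⟩
            set u' := max 0 (u - δ/2) with hu'def
            have hu'0 : 0 ≤ u' := le_max_left _ _
            have hu'u : u' < u := max_lt h0u (by linarith)
            have hu'I : u' ∈ Icc (0:ℝ) 1 := ⟨hu'0, hu'u.le.trans htI.2⟩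
            have hd : |u' - u| < δ := by
              rw [abs_of_nonpos (by linarith)]
              have : u - δ/2 ≤ u' := le_max_right _ _
              linarith
            have h1 : e u' = e u := hδ' u' hu'I hd
            have h2 : e u' = e 0 := H u' ⟨hu'0, hu'u⟩ u' hu'0 le_rfl
            rw [← h1, h2]
      · -- open
        intro t htI hP
        obtain ⟨δ, hδ, hδ'⟩ := heconst t ⟨htI.1, htI.2.le⟩
        set t'' := min 1 (t + δ/2) with ht''def
        have htt'' : t < t'' := lt_min htI.2 (by linarith)
        have ht''1 : t'' ≤ 1 := min_le_left _ _
        refine ⟨t'', ⟨htt'', ht''1⟩, ?_⟩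
        intro u hu hut''
        rcases le_total u t with hut | htu
        · exact hP u hu hut
        · have huI : u ∈ Icc (0:ℝ) 1 := ⟨hu, hut''.trans ht''1⟩
          have hd : |u - t| < δ := by
            rw [abs_of_nonneg (by linarith)]
            have : u ≤ t + δ/2 := hut''.trans (min_le_right _ _)
            linarith
          rw [hδ' u huI hd]
          exact hP t htI.1 le_rfl
    have h0I : (0:ℝ) ∈ Icc (0:ℝ) 1 := ⟨le_rfl, zero_le_one⟩
    have h1I : (1:ℝ) ∈ Icc (0:ℝ) 1 := ⟨zero_le_one, le_rfl⟩
    -- e 0 = a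
    have hΓ0const : ∀ s ∈ Icc (0:ℝ) 1, U ((fun _ => a) s) = Γ 0 s := by
      intro s _
      simp [hΓdef, hpdef, hc0, hy₀]
    have he0 : e 0 = a := by
      rw [hemem 0 h0I]
      have := uniq hrad hr (τ := 1) zero_le_one (hztc 0 h0I) continuousOn_const
        (hztl 0 h0I) hΓ0const (hautoR 0 h0I) (by rw [hzt0 0 h0I, hc0])
      exact this 1 h1I
    -- e 1 = b
    have hΓ1const : ∀ s ∈ Icc (0:ℝ) 1, U ((fun _ => b) s) = Γ 1 s := by
      intro s _
      simp only [hΓdef, hpdef, hc1]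
      rw [← hab]
      simp
    have he1 : e 1 = b := by
      rw [hemem 1 h1I]
      have := uniq hrad hr (τ := 1) zero_le_one (hztc 1 h1I) continuousOn_const
        (hztl 1 h1I) hΓ1const (hautoR 1 h1I) (by rw [hzt0 1 h1I, hc1])
      exact this 1 h1I
    calc a = e 0 := he0.symm
      _ = e 1 := (hP1 1 zero_le_one le_rfl).symm
      _ = b := he1
  have hbij : Function.Bijective U := ⟨hinj, hsurj⟩
  refine ⟨hbij, ?_⟩
  rw [contDiff_iff_contDiffAt]
  intro y
  set x := Function.invFun U y with hxdef
  have hUx : U x = y := Function.rightInverse_invFun hsurj y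
  have hfd : HasFDerivAt U ((E x : (Fin n → ℝ) →L[ℝ] (Fin n → ℝ))) x := by
    rw [hE]; exact hA x
  set φ := (hU.contDiffAt).toOpenPartialHomeomorph U hfd one_ne_zero with hφdef
  have hsrc : x ∈ φ.source := ContDiffAt.mem_toOpenPartialHomeomorph_source _ _ _
  have hcoe : ⇑φ = U := ContDiffAt.toOpenPartialHomeomorph_coe _ _ _
  have htgt : y ∈ φ.target := by
    have := ContDiffAt.image_mem_toOpenPartialHomeomorph_target (hU.contDiffAt) hfd one_ne_zero
    rwa [hUx] at this
  have hsymmy : φ.symm y = x := by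
    have h1 : φ x = y := by rw [hcoe, hUx]
    rw [← h1, φ.left_inv hsrc]
  have hsd : ContDiffAt ℝ 1 φ.symm y :=
    φ.contDiffAt_symm htgt (by rw [hsymmy, hcoe]; exact hfd)
      (by rw [hsymmy, hcoe]; exact hU.contDiffAt)
  have hev : Function.invFun U =ᶠ[nhds y] φ.symm := by
    filter_upwards [φ.open_target.mem_nhds htgt] with y' hy'
    have h1 : U (φ.symm y') = y' := by rw [← hcoe]; exact φ.right_inv hy'
    calc Function.invFun U y' = Function.invFun U (U (φ.symm y')) := by rw [h1]
      _ = φ.symm y' := Function.leftInverse_invFun hinj _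
  exact hsd.congr_of_eventuallyEq hev
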